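/- Let X be a compact abelian group with Haar probability measure ℙ and let g_1, …, g_n be continuous characters of X with pairwise distinct prime orders r_1, …, r_n. Then ℙ(⋂_{k=1}^n g_k⁻¹({1})) = (r_1 r_2 ⋯ r_n)^{-1}, i.e., the events {g_k = 1} are mutually independent. -/

import Mathlib

open MeasureTheory


/-- Evaluation at a point as a monoid hom on the Pontryagin dual. -/
noncomputable def pdEval {X : Type*} [CommGroup X] [TopologicalSpace X] [IsTopologicalGroup X] (x : X) :
    PontryaginDual X →* Circle where
  toFun χ := χ x
  map_one' := rfl
  map_mul' _ _ := rfl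

lemma integral_char_eq_zero {X : Type*} [CommGroup X] [TopologicalSpace X] [IsTopologicalGroup X]
    [CompactSpace X] [MeasurableSpace X] [BorelSpace X]
    (μ : Measure X) [μ.IsHaarMeasure] [IsProbabilityMeasure μ]
    (χ : PontryaginDual X) (hχ : χ ≠ 1) :
    ∫ x, ((χ x : ℂ)) ∂μ = 0 := by
  obtain ⟨x₀, hx₀⟩ : ∃ x₀, χ x₀ ≠ 1 := by
    by_contra h
    push_neg at h
    exact hχ (ContinuousMonoidHom.ext h)
  have h1 : ∫ x, ((χ (x₀ * x) : ℂ)) ∂μ = ∫ x, ((χ x : ℂ)) ∂μ :=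
    integral_mul_left_eq_self (fun y => ((χ y : ℂ))) x₀
  have h2 : ∀ x, ((χ (x₀ * x) : ℂ)) = (χ x₀ : ℂ) * (χ x : ℂ) := by
    intro x; rw [map_mul, Circle.coe_mul]
  simp_rw [h2, MeasureTheory.integral_const_mul] at h1
  have : ((χ x₀ : ℂ) - 1) * ∫ x, ((χ x : ℂ)) ∂μ = 0 := by ring_nf; linear_combination h1
  rcases mul_eq_zero.mp this with h | h
  · exact absurd (by linear_combination h : (χ x₀ : ℂ) = 1)
      (fun e => hx₀ (Circle.coe_injective (by rw [e, Circle.coe_one])))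
  · exact h

lemma measure_ker_char {X : Type*} [CommGroup X] [TopologicalSpace X] [IsTopologicalGroup X]
    [CompactSpace X] [MeasurableSpace X] [BorelSpace X]
    (μ : Measure X) [μ.IsHaarMeasure] [IsProbabilityMeasure μ]
    (χ : PontryaginDual X) (m : ℕ) (hm : 0 < m) (hχm : orderOf χ = m) :
    μ (⇑χ ⁻¹' {1}) = (m : ENNReal)⁻¹ := by
  set S : Set X := ⇑χ ⁻¹' {1} with hS
  have hSmeas : MeasurableSet S :=
    (isClosed_singleton.preimage χ.continuous).measurableSet
  have hm0 : (m : ℂ) ≠ 0 := Nat.cast_ne_zero.mpr hm.ne'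
  -- pointwise identity
  have hpt : ∀ x, S.indicator (fun _ => (1 : ℂ)) x
      = (m : ℂ)⁻¹ * ∑ j ∈ Finset.range m, ((χ x : ℂ)) ^ j := by
    intro x
    by_cases hx : χ x = 1
    · have : x ∈ S := by simp [hS, hx]
      rw [Set.indicator_of_mem this]
      simp [hx, Finset.sum_const, inv_mul_cancel₀ hm0]
    · have hxS : x ∉ S := by simp [hS, hx]
      rw [Set.indicator_of_notMem hxS]
      have hz1 : ((χ x : ℂ)) ≠ 1 := fun e => hx (Circle.coe_injective (by rw [e, Circle.coe_one]))
      have hzm : ((χ x : ℂ)) ^ m = 1 := by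
        have h1 : χ ^ m = 1 := by rw [← hχm]; exact pow_orderOf_eq_one χ
        have h2 : (χ x) ^ m = 1 := by
          have := congrArg (pdEval x) h1
          exact (map_pow (pdEval x) χ m).symm.trans (this.trans (map_one _))
        rw [← Circle.coe_one, ← h2]
        rfl
      rw [geom_sum_eq hz1, hzm, sub_self, zero_div, mul_zero]
  -- integrate both sides
  have hint : ∀ j : ℕ, Integrable (fun x => ((χ x : ℂ)) ^ j) μ := by
    intro j
    apply Continuous.integrable_of_hasCompactSupport
    · exact ((continuous_subtype_val.comp χ.continuous).pow j)
    · exact (isClosed_tsupport _).isCompact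
  have h1 : ∫ x, S.indicator (fun _ => (1 : ℂ)) x ∂μ = (μ S).toReal • (1 : ℂ) :=
    integral_indicator_const _ hSmeas
  have h2 : ∫ x, (m : ℂ)⁻¹ * ∑ j ∈ Finset.range m, ((χ x : ℂ)) ^ j ∂μ = (m : ℂ)⁻¹ := by
    rw [MeasureTheory.integral_const_mul, integral_finset_sum _ (fun j _ => hint j)]
    have hterm : ∀ j ∈ Finset.range m, ∫ x, ((χ x : ℂ)) ^ j ∂μ
        = if j = 0 then 1 else 0 := by
      intro j hj
      rcases Nat.eq_zero_or_pos j with rfl | hjpos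
      · simp
      · rw [if_neg hjpos.ne']
        have hne : χ ^ j ≠ 1 := by
          intro e
          have h3 := orderOf_le_of_pow_eq_one hjpos e
          rw [hχm] at h3
          rw [Finset.mem_range] at hj
          omega
        have hz := integral_char_eq_zero μ (χ ^ j) hne
        have hrw : ∀ x, (((χ ^ j) x : ℂ)) = ((χ x : ℂ)) ^ j := by
          intro x
          have e1 : ((χ ^ j) x) = (χ x) ^ j := map_pow (pdEval x) χ j
          rw [e1]
          exact map_pow Circle.coeHom (χ x) j
        simp_rw [hrw] at hz
        exact hz
    rw [Finset.sum_congr rfl hterm]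
    simp [Finset.sum_ite_eq', Finset.mem_range, hm, inv_mul_cancel₀ hm0]
  have heq : ((μ S).toReal : ℂ) = (m : ℂ)⁻¹ := by
    have h3 := integral_congr_ae (μ := μ) (Filter.Eventually.of_forall hpt)
    rw [h1, h2] at h3
    simpa using h3
  have hreal : (μ S).toReal = ((m : ℝ))⁻¹ := by
    have h4 : ((μ S).toReal : ℂ) = (((m : ℝ))⁻¹ : ℂ) := by push_cast; exact heq
    exact_mod_cast h4
  rw [← ENNReal.ofReal_toReal (measure_ne_top μ S), hreal]
  rw [ENNReal.ofReal_inv_of_pos (by exact_mod_cast hm), ENNReal.ofReal_natCast]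

lemma orderOf_prod_of_coprime {G : Type*} [CommGroup G] {ι : Type*} [DecidableEq ι]
    (s : Finset ι) (f : ι → G)
    (h : ∀ i ∈ s, ∀ j ∈ s, i ≠ j → Nat.Coprime (orderOf (f i)) (orderOf (f j))) :
    orderOf (∏ i ∈ s, f i) = ∏ i ∈ s, orderOf (f i) := by
  induction s using Finset.induction_on with
  | empty => simp
  | @insert a s ha ih =>
    rw [Finset.prod_insert ha, Finset.prod_insert ha]
    have hih : orderOf (∏ i ∈ s, f i) = ∏ i ∈ s, orderOf (f i) :=
      ih (fun i hi j hj hij => h i (Finset.mem_insert_of_mem hi) j (Finset.mem_insert_of_mem hj) hij)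
    rw [(Commute.all (f a) _).orderOf_mul_eq_mul_orderOf_of_coprime ?_, hih]
    rw [hih]
    exact Nat.Coprime.prod_right fun j hj =>
      h a (Finset.mem_insert_self a s) j (Finset.mem_insert_of_mem hj)
        (fun e => ha (e ▸ hj))


/-- On a compact abelian group with Haar probability measure, if `g 1, …, g n` are
continuous characters with pairwise distinct prime orders `r 1, …, r n`, then the
events `{g k = 1}` are mutually independent:
`ℙ(⋂ₖ gₖ⁻¹{1}) = (r 1 ⋯ r n)⁻¹`. -/
theorem haar_measure_inter_kernels_of_distinct_prime_order_characters
    {X : Type*} [CommGroup X] [TopologicalSpace X] [IsTopologicalGroup X] [CompactSpace X]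
    [MeasurableSpace X] [BorelSpace X]
    (μ : Measure X) [μ.IsHaarMeasure] [IsProbabilityMeasure μ]
    (n : ℕ) (r : Fin n → ℕ) (hprime : ∀ k, (r k).Prime)
    (hdist : Function.Injective r)
    (g : Fin n → PontryaginDual X) (hord : ∀ k, orderOf (g k) = r k) :
    μ (⋂ k, ⇑(g k) ⁻¹' {1}) = (∏ k, (r k : ENNReal))⁻¹ := by
  have hcop : ∀ i j : Fin n, i ≠ j → Nat.Coprime (r i) (r j) := fun i j hij =>
    (Nat.coprime_primes (hprime i) (hprime j)).mpr (fun e => hij (hdist e))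
  -- the intersection of kernels equals the kernel of the product character
  have hker : (⋂ k, ⇑(g k) ⁻¹' {1}) = ⇑(∏ k, g k) ⁻¹' {1} := by
    apply Set.Subset.antisymm
    · intro x hx
      simp only [Set.mem_iInter, Set.mem_preimage, Set.mem_singleton_iff] at hx ⊢
      have hm : (∏ k, g k) x = ∏ k, (g k) x := map_prod (pdEval x) g Finset.univ
      rw [hm, Finset.prod_congr rfl (fun k _ => hx k)]
      simp
    · intro x hx
      simp only [Set.mem_preimage, Set.mem_singleton_iff] at hx
      simp only [Set.mem_iInter, Set.mem_preimage, Set.mem_singleton_iff]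
      intro k
      set z : Fin n → Circle := fun j => g j x with hz
      have hm : (∏ k, g k) x = ∏ j, z j := map_prod (pdEval x) g Finset.univ
      have hprod : ∏ j, z j = 1 := by rw [← hm]; exact hx
      have hzj : ∀ j, z j ^ r j = 1 := by
        intro j
        have h1 : (g j) ^ (r j) = 1 := by rw [← hord j]; exact pow_orderOf_eq_one _
        have := congrArg (pdEval x) h1
        exact (map_pow (pdEval x) (g j) (r j)).symm.trans (this.trans (map_one _))
      have hdvd : ∀ j, orderOf (z j) ∣ r j := fun j => orderOf_dvd_of_pow_eq_one (hzj j)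
      set P : ℕ := ∏ j ∈ Finset.univ.erase k, r j with hP
      have hzkP : z k ^ P = 1 := by
        have h1 : z k * ∏ j ∈ Finset.univ.erase k, z j = 1 := by
          rw [Finset.mul_prod_erase Finset.univ z (Finset.mem_univ k)]; exact hprod
        have h2 : ∀ j ∈ Finset.univ.erase k, z j ^ P = 1 := by
          intro j hj
          exact orderOf_dvd_iff_pow_eq_one.mp
            ((hdvd j).trans (Finset.dvd_prod_of_mem r hj))
        have h3 : (∏ j ∈ Finset.univ.erase k, z j) ^ P = 1 := by
          rw [← Finset.prod_pow]
          exact Finset.prod_eq_one h2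
        calc z k ^ P = (z k * ∏ j ∈ Finset.univ.erase k, z j) ^ P
              * ((∏ j ∈ Finset.univ.erase k, z j) ^ P)⁻¹ := by
                rw [mul_pow]; group
          _ = 1 := by rw [h1, h3]; group
      have hcopP : Nat.Coprime (r k) P :=
        Nat.Coprime.prod_right fun j hj =>
          hcop k j (fun e => (Finset.mem_erase.mp hj).1 e.symm)
      have h4 : orderOf (z k) ∣ Nat.gcd (r k) P :=
        Nat.dvd_gcd (hdvd k) (orderOf_dvd_of_pow_eq_one hzkP)
      rw [hcopP] at h4
      have : orderOf (z k) = 1 := Nat.eq_one_of_dvd_one h4  -- fix name if needed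
      exact orderOf_eq_one_iff.mp this
  rw [hker]
  have hordprod : orderOf (∏ k, g k) = ∏ k, r k := by
    rw [orderOf_prod_of_coprime Finset.univ g
      (fun i _ j _ hij => by rw [hord i, hord j]; exact hcop i j hij)]
    exact Finset.prod_congr rfl fun k _ => hord k
  have hpos : 0 < ∏ k, r k := Finset.prod_pos fun k _ => (hprime k).pos
  rw [measure_ker_char μ _ _ hpos hordprod]
  rw [Nat.cast_prod]
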